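/- (Corollary of Lemma 3.4 with λ = μ, z₁ = x, z₂ = x⁻¹: the tangent weights of the Hilbert scheme at a monomial ideal are {h(□), −h(□)}.) Let λ be a partition and let x be a complex number with |x| > 1. Then ∑_{i=1}^{ℓ(λ)} ∑_{j=1}^{∞} (x^{λ_i} − 1)·x^{1−j}·x^{λ^t_j − i} + ∑_{j=1}^{λ_1} ∑_{i=1}^{∞} (x^{λ^t_j} − 1)·x^{1−j}·x^{−i} = ∑_{□∈λ} (x^{h(□)} + x^{−h(□)}), where both double series converge absolutely. -/

import Mathlib

/-- A partition: a weakly decreasing sequence of nonnegative integers with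
finitely many nonzero terms (encoded as a finitely supported function,
`parts i` being the `(i+1)`-st part). -/
structure Ptn where
  parts : ℕ →₀ ℕ
  antitone' : ∀ ⦃i j : ℕ⦄, i ≤ j → parts j ≤ parts i

namespace Ptn

/-- The size `|μ| = ∑ μ_i`. -/
def size (μ : Ptn) : ℕ := μ.parts.sum fun _ v => v

/-- The diagram of `μ`, as a finset of (0-indexed) cells `(i, j)` with `j < μ.parts i`;
the cell `(i, j)` corresponds to the 1-indexed cell `(i+1, j+1)`. -/
def cells (μ : Ptn) : Finset (ℕ × ℕ) :=
  (Finset.range (μ.size + 1) ×ˢ Finset.range (μ.size + 1)).filter fun c => c.2 < μ.parts c.1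

/-- The transpose partition evaluated at the (0-indexed) column `j`:
`μ.conj j = #{i : μ_i ≥ j+1}`. -/
def conj (μ : Ptn) (j : ℕ) : ℕ :=
  ((Finset.range (μ.size + 1)).filter fun i => j < μ.parts i).card

/-- The number of (nonzero) parts `ℓ(μ)`. -/
def len (μ : Ptn) : ℕ := μ.conj 0

/-- The (generalized, possibly negative) arm length of the 0-indexed cell `c`. -/
def arm (lam : Ptn) (c : ℕ × ℕ) : ℤ := (lam.parts c.1 : ℤ) - c.2 - 1

/-- The (generalized, possibly negative) leg length of the 0-indexed cell `c`. -/
def leg (mu : Ptn) (c : ℕ × ℕ) : ℤ := (mu.conj c.2 : ℤ) - c.1 - 1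

/-- The hook length of a cell. -/
def hook (μ : Ptn) (c : ℕ × ℕ) : ℤ := μ.arm c + μ.leg c + 1

end Ptn


namespace Ptn

variable (μ : Ptn)

lemma lt_size_of_ne {i : ℕ} (h : μ.parts i ≠ 0) : i < μ.size + 1 := by
  have h1 : ∀ k ∈ Finset.range (i+1), (1:ℕ) ≤ μ.parts k := by
    intro k hk
    have hk' : k ≤ i := Nat.le_of_lt_succ (Finset.mem_range.mp hk)
    have := μ.antitone' hk'
    omega
  have h2 : Finset.range (i+1) ⊆ μ.parts.support := by
    intro k hk
    exact Finsupp.mem_support_iff.mpr (by have := h1 k hk; omega)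
  have h3 : (i+1 : ℕ) ≤ ∑ k ∈ Finset.range (i+1), μ.parts k := by
    calc (i+1 : ℕ) = ∑ _k ∈ Finset.range (i+1), 1 := by simp
    _ ≤ _ := Finset.sum_le_sum h1
  have h4 : ∑ k ∈ Finset.range (i+1), μ.parts k ≤ μ.size := by
    unfold size
    rw [Finsupp.sum]
    exact Finset.sum_le_sum_of_subset h2
  omega

lemma parts_le_size (i : ℕ) : μ.parts i ≤ μ.size := by
  rcases eq_or_ne (μ.parts i) 0 with h | h
  · simp [h]
  · unfold size
    rw [Finsupp.sum]
    exact Finset.single_le_sum (fun k _ => Nat.zero_le _) (Finsupp.mem_support_iff.mpr h)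

lemma lt_conj_iff {i j : ℕ} : i < μ.conj j ↔ j < μ.parts i := by
  constructor
  · intro h
    by_contra hc
    push_neg at hc
    have hsub : ((Finset.range (μ.size+1)).filter fun k => j < μ.parts k) ⊆ Finset.range i := by
      intro k hk
      simp only [Finset.mem_filter, Finset.mem_range] at hk ⊢
      by_contra hki
      push_neg at hki
      have := μ.antitone' hki
      omega
    have hcard := Finset.card_le_card hsub
    rw [Finset.card_range] at hcard
    unfold conj at h
    omega
  · intro h
    have hsub : Finset.range (i+1) ⊆ (Finset.range (μ.size+1)).filter fun k => j < μ.parts k := by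
      intro k hk
      rw [Finset.mem_range] at hk
      have hp : j < μ.parts k := lt_of_lt_of_le h (μ.antitone' (by omega))
      have hs : k < μ.size + 1 := μ.lt_size_of_ne (by omega)
      simp only [Finset.mem_filter, Finset.mem_range]
      exact ⟨hs, hp⟩
    have hcard := Finset.card_le_card hsub
    rw [Finset.card_range] at hcard
    unfold conj
    omega

lemma lt_len_iff {i : ℕ} : i < μ.len ↔ μ.parts i ≠ 0 := by
  unfold len
  rw [lt_conj_iff]
  omega

lemma conj_le_len (j : ℕ) : μ.conj j ≤ μ.len := by
  by_contra h
  push_neg at h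
  have h2 : j < μ.parts μ.len := μ.lt_conj_iff.mp h
  have h3 : μ.parts μ.len = 0 := by
    by_contra h4
    exact absurd (μ.lt_len_iff.mpr h4) (lt_irrefl _)
  omega

lemma conj_eq_zero {j : ℕ} (h : μ.parts 0 ≤ j) : μ.conj j = 0 := by
  by_contra hc
  have := μ.lt_conj_iff.mp (Nat.pos_of_ne_zero hc)
  omega

lemma parts_eq_zero_of_len_le {i : ℕ} (h : μ.len ≤ i) : μ.parts i = 0 := by
  by_contra hc
  have := μ.lt_len_iff.mpr hc
  omega

lemma nat_eq_of_lt_iff {a b : ℕ} (h : ∀ i, i < a ↔ i < b) : a = b := by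
  have h1 := h a
  have h2 := h b
  omega

/-- Remove the top (last nonzero) row. -/
noncomputable def eraseTop (μ : Ptn) (n : ℕ) (h : μ.parts (n+1) = 0) : Ptn where
  parts := μ.parts.erase n
  antitone' := by
    intro i j hij
    rcases eq_or_ne j n with rfl | hj
    · simp [Finsupp.erase_same]
    · rw [Finsupp.erase_ne hj]
      rcases eq_or_ne i n with rfl | hi
      · have hij' : i + 1 ≤ j := by omega
        have := μ.antitone' hij'
        rw [h] at this
        omega
      · rw [Finsupp.erase_ne hi]
        exact μ.antitone' hij

variable {n : ℕ} (hn : μ.parts (n+1) = 0)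

lemma eraseTop_parts (i : ℕ) : (μ.eraseTop n hn).parts i = if i = n then 0 else μ.parts i := by
  rcases eq_or_ne i n with rfl | hi
  · simp [eraseTop, Finsupp.erase_same]
  · simp [eraseTop, Finsupp.erase_ne hi, hi]

lemma eraseTop_conj_ge {j : ℕ} (hj : μ.parts n ≤ j) :
    (μ.eraseTop n hn).conj j = μ.conj j := by
  apply nat_eq_of_lt_iff
  intro i
  rw [Ptn.lt_conj_iff, Ptn.lt_conj_iff, eraseTop_parts]
  rcases eq_or_ne i n with rfl | hi
  · simp; omega
  · simp [hi]

lemma eraseTop_conj_lt (hlen : μ.len = n+1) {j : ℕ} (hj : j < μ.parts n) :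
    (μ.eraseTop n hn).conj j = n := by
  apply nat_eq_of_lt_iff
  intro i
  rw [Ptn.lt_conj_iff, eraseTop_parts]
  rcases eq_or_ne i n with rfl | hi
  · simp
  · simp only [hi, if_false]
    constructor
    · intro h
      have : i < μ.len := μ.lt_len_iff.mpr (by omega)
      omega
    · intro h
      have : i < n := by omega
      exact lt_of_lt_of_le hj (μ.antitone' (by omega))

lemma conj_eq_of_lt (hlen : μ.len = n+1) {j : ℕ} (hj : j < μ.parts n) :
    μ.conj j = n + 1 := by
  apply nat_eq_of_lt_iff
  intro i
  rw [Ptn.lt_conj_iff]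
  constructor
  · intro h
    have : i < μ.len := μ.lt_len_iff.mpr (by omega)
    omega
  · intro h
    exact lt_of_lt_of_le hj (μ.antitone' (by omega))

lemma eraseTop_len (hlen : μ.len = n+1) : (μ.eraseTop n hn).len = n := by
  have hm : 0 < μ.parts n := by
    have := μ.lt_len_iff.mp (by omega : n < μ.len)
    omega
  exact μ.eraseTop_conj_lt hn hlen hm

end Ptn

section Analytic
open Finset

variable {x : ℂ}

lemma hx0 (hx : 1 < ‖x‖) : x ≠ 0 := by
  intro h; rw [h] at hx; simp at hx; linarith

lemma hx1 (hx : 1 < ‖x‖) : x ≠ 1 := by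
  intro h; rw [h] at hx; simp at hx

lemma hxm1 (hx : 1 < ‖x‖) : x - 1 ≠ 0 := sub_ne_zero.mpr (hx1 hx)

lemma hinv_lt (hx : 1 < ‖x‖) : ‖x⁻¹‖ < 1 := by
  rw [norm_inv]
  exact inv_lt_one_of_one_lt₀ hx

lemma hinv1 (hx : 1 < ‖x‖) : x⁻¹ ≠ 1 := by
  intro h
  rw [inv_eq_one] at h
  exact hx1 hx h

lemma summable_norm_zpow (hx : 1 < ‖x‖) (e : ℕ → ℤ) (K : ℤ) (he : ∀ j, e j ≤ K - j) :
    Summable fun j : ℕ => ‖x ^ (e j)‖ := by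
  have h0 : (0:ℝ) < ‖x‖ := lt_trans one_pos hx
  apply Summable.of_nonneg_of_le (fun _ => norm_nonneg _) (fun j => ?_)
    ((summable_geometric_of_lt_one (by positivity) (inv_lt_one_of_one_lt₀ hx)).mul_left (‖x‖ ^ K))
  rw [norm_zpow]
  calc ‖x‖ ^ e j ≤ ‖x‖ ^ (K - j) := by
        apply zpow_le_zpow_right₀ hx.le (he j)
  _ = ‖x‖ ^ K * (‖x‖⁻¹) ^ j := by
        rw [zpow_sub₀ (ne_of_gt h0), inv_pow, ← zpow_natCast ‖x‖ j]
        ring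

lemma summable_zpow (hx : 1 < ‖x‖) (e : ℕ → ℤ) (K : ℤ) (he : ∀ j, e j ≤ K - j) :
    Summable fun j : ℕ => x ^ (e j) :=
  Summable.of_norm (summable_norm_zpow hx e K he)

lemma tsum_geom_shift (hx : 1 < ‖x‖) : ∑' i : ℕ, x ^ (-(i:ℤ) - 1) = (x - 1)⁻¹ := by
  have h0 := hx0 hx
  have : ∀ i : ℕ, x ^ (-(i:ℤ) - 1) = x⁻¹ * (x⁻¹) ^ i := by
    intro i
    rw [zpow_sub₀ h0, zpow_neg, zpow_natCast, zpow_one, inv_pow]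
    ring
  rw [tsum_congr this, tsum_mul_left, tsum_geometric_of_norm_lt_one (hinv_lt hx)]
  field_simp

end Analytic

section LemA
open Finset

lemma lemA {x : ℂ} (hx : 1 < ‖x‖) : ∀ (n : ℕ) (μ : Ptn), μ.len = n →
    ∑' j : ℕ, x ^ ((μ.conj j : ℤ) - j)
      = x ^ ((n:ℤ)+1) / (x-1) - x * ∑ k ∈ Finset.range n, x ^ ((k:ℤ) - (μ.parts k : ℤ)) := by
  have h0 : x ≠ 0 := hx0 hx
  have h1 : x - 1 ≠ 0 := hxm1 hx
  have h2 : x⁻¹ - 1 ≠ 0 := sub_ne_zero.mpr (hinv1 hx)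
  intro n
  induction n with
  | zero =>
    intro μ h
    have hc : ∀ j, μ.conj j = 0 := fun j => Nat.le_zero.mp (h ▸ μ.conj_le_len j)
    have he : ∀ j : ℕ, x ^ ((μ.conj j : ℤ) - j) = (x⁻¹)^j := by
      intro j
      rw [hc j, inv_pow, ← zpow_natCast x j, ← zpow_neg]
      norm_num
    rw [tsum_congr he, tsum_geometric_of_norm_lt_one (hinv_lt hx)]
    simp only [range_zero, sum_empty, mul_zero, sub_zero, zero_add, zpow_one]
    field_simp
    norm_num
  | succ n ih =>
    intro μ hlen
    have hmpos : 0 < μ.parts n := by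
      have := μ.lt_len_iff.mp (by omega : n < μ.len); omega
    set m := μ.parts n with hm
    have hnext : μ.parts (n+1) = 0 := μ.parts_eq_zero_of_len_le (by omega)
    set ν := μ.eraseTop n hnext with hνdef
    have hνlen : ν.len = n := μ.eraseTop_len hnext hlen
    have hcge : ∀ j, m ≤ j → ν.conj j = μ.conj j := fun j hj => μ.eraseTop_conj_ge hnext hj
    have hclt : ∀ j, j < m → μ.conj j = n + 1 := fun j hj => μ.conj_eq_of_lt hlen hj
    have hclt' : ∀ j, j < m → ν.conj j = n := fun j hj => μ.eraseTop_conj_lt hnext hlen hj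
    have hparts : ∀ i, i ≠ n → ν.parts i = μ.parts i := by
      intro i hi; rw [μ.eraseTop_parts hnext, if_neg hi]
    have hsumμ : Summable fun j : ℕ => x ^ ((μ.conj j : ℤ) - j) :=
      summable_zpow hx _ (μ.len : ℤ) (fun j => by have := μ.conj_le_len j; omega)
    have hsumν : Summable fun j : ℕ => x ^ ((ν.conj j : ℤ) - j) :=
      summable_zpow hx _ (ν.len : ℤ) (fun j => by have := ν.conj_le_len j; omega)
    have hdiff : (∑' j : ℕ, x ^ ((μ.conj j : ℤ) - j)) - (∑' j : ℕ, x ^ ((ν.conj j : ℤ) - j))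
        = ∑ j ∈ range m, (x ^ ((n:ℤ) + 1 - j) - x ^ ((n:ℤ) - j)) := by
      rw [← Summable.tsum_sub hsumμ hsumν]
      rw [tsum_eq_sum (s := range m) ?_]
      · apply Finset.sum_congr rfl
        intro j hj
        rw [mem_range] at hj
        rw [hclt j hj, hclt' j hj]
        push_cast
        ring_nf
      · intro j hj
        rw [mem_range, not_lt] at hj
        rw [hcge j hj, sub_self]
    have IH := ih ν hνlen
    have hS : ∑ k ∈ range (n+1), x ^ ((k:ℤ) - (μ.parts k:ℤ))
        = (∑ k ∈ range n, x ^ ((k:ℤ) - (ν.parts k:ℤ))) + x ^ ((n:ℤ) - (m:ℤ)) := by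
      rw [sum_range_succ]
      congr 1
      apply Finset.sum_congr rfl
      intro k hk
      rw [mem_range] at hk
      rw [hparts k (by omega)]
    have hW : ∑' j : ℕ, x ^ ((μ.conj j : ℤ) - j)
        = (∑' j : ℕ, x ^ ((ν.conj j : ℤ) - j))
          + ∑ j ∈ range m, (x ^ ((n:ℤ)+1-(j:ℤ)) - x ^ ((n:ℤ)-(j:ℤ))) := by
      rw [← hdiff]; ring
    rw [hW, IH, hS]
    have hgeo : ∑ j ∈ range m, (x ^ ((n:ℤ)+1-(j:ℤ)) - x ^ ((n:ℤ)-(j:ℤ)))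
        = x ^ ((n:ℤ)+1) - x ^ ((n:ℤ)+1-(m:ℤ)) := by
      have h := Finset.sum_range_sub (fun j : ℕ => -x ^ ((n:ℤ)+1-(j:ℤ))) m
      have hterm : ∀ j : ℕ, -x ^ ((n:ℤ)+1-((j:ℤ)+1)) - (-x ^ ((n:ℤ)+1-(j:ℤ)))
          = x ^ ((n:ℤ)+1-(j:ℤ)) - x ^ ((n:ℤ)-(j:ℤ)) := by
        intro j
        rw [show (n:ℤ)+1-((j:ℤ)+1) = (n:ℤ)-(j:ℤ) from by ring]
        ring
      rw [Finset.sum_congr rfl (fun j _ => by push_cast; exact hterm j)] at h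
      rw [h]
      push_cast
      ring
    rw [hgeo]
    have hmne : x ^ (m:ℤ) ≠ 0 := zpow_ne_zero _ h0
    have hnne : x ^ (n:ℤ) ≠ 0 := zpow_ne_zero _ h0
    push_cast
    rw [zpow_sub₀ h0 (n:ℤ) (m:ℤ), zpow_add₀ h0 (n:ℤ) 1, zpow_add₀ h0 ((n:ℤ)+1) 1,
        zpow_add₀ h0 (n:ℤ) 1, zpow_sub₀ h0 ((n:ℤ)+1) (m:ℤ), zpow_add₀ h0 (n:ℤ) 1, zpow_one]
    field_simp
    ring

end LemA

section Aux
open Finset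

set_option maxHeartbeats 2000000 in
lemma aux {x : ℂ} (hx : 1 < ‖x‖) : ∀ (n : ℕ) (μ : Ptn), μ.len = n →
    ∀ B L : ℕ, μ.parts 0 ≤ B → μ.len ≤ L →
    (∑ i ∈ range μ.len, (x ^ (μ.parts i : ℤ) - 1) * x ^ (-(i:ℤ)-1)) *
      (x ^ ((μ.len:ℤ)+1) / (x-1) - x * ∑ k ∈ range μ.len, x ^ ((k:ℤ) - (μ.parts k : ℤ)))
    + (∑ j ∈ range B, (x ^ (μ.conj j : ℤ) - 1) * x ^ (-(j:ℤ))) / (x-1)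
    = ∑ i ∈ range L, ∑ j ∈ range (μ.parts i),
        (x ^ ((μ.parts i : ℤ) + (μ.conj j : ℤ) - i - j - 1)
          + x ^ (-((μ.parts i : ℤ) + (μ.conj j : ℤ) - i - j - 1))) := by
  have h0 : x ≠ 0 := hx0 hx
  have h1 : x - 1 ≠ 0 := hxm1 hx
  have hxx : x * x⁻¹ = 1 := mul_inv_cancel₀ h0
  intro n
  induction n with
  | zero =>
    intro μ h B L _ _
    have hc : ∀ j, μ.conj j = 0 := fun j => Nat.le_zero.mp (h ▸ μ.conj_le_len j)
    have hp : ∀ i, μ.parts i = 0 := fun i => μ.parts_eq_zero_of_len_le (by omega)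
    rw [h]
    simp [hc, hp]
  | succ n ih =>
    intro μ hlen B L hB hL
    have hmpos : 0 < μ.parts n := by
      have := μ.lt_len_iff.mp (by omega : n < μ.len); omega
    set m := μ.parts n with hm
    have hnext : μ.parts (n+1) = 0 := μ.parts_eq_zero_of_len_le (by omega)
    set ν := μ.eraseTop n hnext with hνdef
    have hνlen : ν.len = n := μ.eraseTop_len hnext hlen
    have hcge : ∀ j, m ≤ j → ν.conj j = μ.conj j := fun j hj => μ.eraseTop_conj_ge hnext hj
    have hclt : ∀ j, j < m → μ.conj j = n + 1 := fun j hj => μ.conj_eq_of_lt hlen hj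
    have hclt' : ∀ j, j < m → ν.conj j = n := fun j hj => μ.eraseTop_conj_lt hnext hlen hj
    have hparts : ∀ i, i ≠ n → ν.parts i = μ.parts i := by
      intro i hi; rw [μ.eraseTop_parts hnext, if_neg hi]
    have hmB : m ≤ B := le_trans (μ.antitone' (Nat.zero_le n)) hB
    have hBν : ν.parts 0 ≤ B := by
      rw [μ.eraseTop_parts hnext]
      split <;> omega
    have hLν : ν.len ≤ L := by omega
    have IH := ih ν hνlen B L hBν hLν
    rw [hνlen] at IH
    have hRconv : (∑ i ∈ range n, (x ^ (ν.parts i:ℤ) - 1) * x ^ (-(i:ℤ)-1))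
        = ∑ i ∈ range n, (x ^ (μ.parts i:ℤ) - 1) * x ^ (-(i:ℤ)-1) :=
      Finset.sum_congr rfl (fun i hi => by
        rw [mem_range] at hi; rw [hparts i (by omega)])
    have hSconv : (∑ k ∈ range n, x ^ ((k:ℤ) - (ν.parts k:ℤ)))
        = ∑ k ∈ range n, x ^ ((k:ℤ) - (μ.parts k:ℤ)) :=
      Finset.sum_congr rfl (fun k hk => by
        rw [mem_range] at hk; rw [hparts k (by omega)])
    rw [hRconv, hSconv] at IH
    set Rn : ℂ := ∑ i ∈ range n, (x ^ (μ.parts i:ℤ) - 1) * x ^ (-(i:ℤ)-1) with hRndef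
    set Sn : ℂ := ∑ k ∈ range n, x ^ ((k:ℤ) - (μ.parts k:ℤ)) with hSndef
    set Cν : ℂ := ∑ j ∈ range B, (x ^ (ν.conj j:ℤ) - 1) * x ^ (-(j:ℤ)) with hCνdef
    set Hν : ℂ := ∑ i ∈ range L, ∑ j ∈ range (ν.parts i),
        (x ^ ((ν.parts i : ℤ) + (ν.conj j : ℤ) - i - j - 1)
          + x ^ (-((ν.parts i : ℤ) + (ν.conj j : ℤ) - i - j - 1))) with hHνdef
    set g : ℂ := ∑ j ∈ range m, (x⁻¹)^j with hgdef
    set gbar : ℂ := ∑ j ∈ range m, x^j with hgbardef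
    set G : ℂ := ∑ i ∈ range n, (x⁻¹)^i with hGdef
    -- closed forms
    have hg3 : g = (x - x * (x^m)⁻¹) / (x-1) := by
      rw [eq_div_iff h1]
      have h3 := geom_sum_mul x⁻¹ m
      rw [inv_pow] at h3
      linear_combination (-x) * h3 + g * hxx
    have hgbar3 : gbar = (x^m - 1) / (x-1) := by
      rw [eq_div_iff h1]
      exact geom_sum_mul x m
    have hG3 : G = (x - x * (x^n)⁻¹) / (x-1) := by
      rw [eq_div_iff h1]
      have h3 := geom_sum_mul x⁻¹ n
      rw [inv_pow] at h3
      linear_combination (-x) * h3 + G * hxx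
    -- C delta
    have e3 : (∑ j ∈ range B, (x ^ (μ.conj j:ℤ) - 1) * x ^ (-(j:ℤ))) - Cν
        = (x^n * x - x^n) * g := by
      rw [hCνdef, hgdef, ← Finset.sum_sub_distrib, Finset.mul_sum,
          ← Finset.sum_subset (Finset.range_subset_range.mpr hmB)
            (fun j _ hj => by
              rw [mem_range, not_lt] at hj
              rw [hcge j hj]; ring)]
      apply Finset.sum_congr rfl
      intro j hj
      rw [mem_range] at hj
      rw [hclt j hj, hclt' j hj,
          show (((n+1:ℕ)):ℤ) = (n:ℤ) + 1 from by push_cast; ring]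
      simp only [zpow_add₀ h0, zpow_natCast, zpow_neg, zpow_one, inv_pow]
      ring
    -- row deltas for i < n
    have rowdelta : ∀ i, i < n →
        (∑ j ∈ range (μ.parts i),
            (x ^ ((μ.parts i : ℤ) + (μ.conj j : ℤ) - i - j - 1)
              + x ^ (-((μ.parts i : ℤ) + (μ.conj j : ℤ) - i - j - 1))))
        - (∑ j ∈ range (ν.parts i),
            (x ^ ((ν.parts i : ℤ) + (ν.conj j : ℤ) - i - j - 1)
              + x ^ (-((ν.parts i : ℤ) + (ν.conj j : ℤ) - i - j - 1))))
        = x ^ ((μ.parts i:ℤ) - i) * (x^n * (1 - x⁻¹)) * g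
          + x ^ ((i:ℤ) - (μ.parts i:ℤ)) * ((x^n)⁻¹ * (1 - x)) * gbar := by
      intro i hi
      simp only [hparts i (by omega : i ≠ n)]
      rw [hgdef, hgbardef, ← Finset.sum_sub_distrib, Finset.mul_sum, Finset.mul_sum,
          ← Finset.sum_add_distrib,
          ← Finset.sum_subset (Finset.range_subset_range.mpr (μ.antitone' (by omega : i ≤ n)))
            (fun j _ hj => by
              rw [mem_range, not_lt] at hj
              rw [hcge j hj]; ring)]
      apply Finset.sum_congr rfl
      intro j hj
      rw [mem_range] at hj
      rw [hclt j hj, hclt' j hj,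
          show ((μ.parts i:ℤ) + ((n+1:ℕ):ℤ) - (i:ℤ) - (j:ℤ) - 1)
            = ((μ.parts i:ℤ) - (i:ℤ)) + (n:ℤ) + (-(j:ℤ)) from by push_cast; ring,
          show ((μ.parts i:ℤ) + ((n:ℕ):ℤ) - (i:ℤ) - (j:ℤ) - 1)
            = (((μ.parts i:ℤ) - (i:ℤ)) + (n:ℤ) + (-(j:ℤ))) + (-1:ℤ) from by push_cast; ring,
          show (-(((μ.parts i:ℤ) - (i:ℤ)) + (n:ℤ) + (-(j:ℤ))))
            = ((i:ℤ) - (μ.parts i:ℤ)) + (-(n:ℤ)) + (j:ℤ) from by ring,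
          show (-((((μ.parts i:ℤ) - (i:ℤ)) + (n:ℤ) + (-(j:ℤ))) + (-1:ℤ)))
            = (((i:ℤ) - (μ.parts i:ℤ)) + (-(n:ℤ)) + (j:ℤ)) + 1 from by ring]
      simp only [zpow_add₀ h0, zpow_natCast, zpow_neg, zpow_one, inv_pow]
      ring
    -- row n
    have rown : (∑ j ∈ range m,
            (x ^ ((m : ℤ) + (μ.conj j : ℤ) - n - j - 1)
              + x ^ (-((m : ℤ) + (μ.conj j : ℤ) - n - j - 1))))
        = x^m * g + (x^m)⁻¹ * gbar := by
      rw [hgdef, hgbardef, Finset.mul_sum, Finset.mul_sum, ← Finset.sum_add_distrib]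
      apply Finset.sum_congr rfl
      intro j hj
      rw [mem_range] at hj
      rw [hclt j hj,
          show ((m:ℤ) + ((n+1:ℕ):ℤ) - (n:ℤ) - (j:ℤ) - 1) = (m:ℤ) + (-(j:ℤ)) from by
            push_cast; ring,
          show (-((m:ℤ) + (-(j:ℤ)))) = (-(m:ℤ)) + (j:ℤ) from by ring]
      simp only [zpow_add₀ h0, zpow_natCast, zpow_neg, zpow_one, inv_pow]
    -- sum of positive row coefficients
    have hA : (∑ i ∈ range n, x ^ ((μ.parts i:ℤ) - i)) = x * Rn + G := by
      rw [hRndef, hGdef, Finset.mul_sum, ← Finset.sum_add_distrib]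
      apply Finset.sum_congr rfl
      intro i _
      rw [show ((μ.parts i:ℤ) - (i:ℤ)) = (μ.parts i:ℤ) + (-(i:ℤ)) from by ring,
          show (-(i:ℤ) - 1) = (-(i:ℤ)) + (-1:ℤ) from by ring]
      simp only [zpow_add₀ h0, zpow_natCast, zpow_neg, zpow_one, inv_pow]
      linear_combination (-((x ^ (μ.parts i) - 1) * (x ^ i)⁻¹)) * hxx
    -- H delta
    have e4 : (∑ i ∈ range L, ∑ j ∈ range (μ.parts i),
          (x ^ ((μ.parts i : ℤ) + (μ.conj j : ℤ) - i - j - 1)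
            + x ^ (-((μ.parts i : ℤ) + (μ.conj j : ℤ) - i - j - 1)))) - Hν
        = (x * Rn + G) * (x^n * (1 - x⁻¹)) * g + Sn * ((x^n)⁻¹ * (1 - x)) * gbar
          + (x^m * g + (x^m)⁻¹ * gbar) := by
      rw [hHνdef, ← Finset.sum_sub_distrib,
          ← Finset.sum_subset (Finset.range_subset_range.mpr (by omega : n + 1 ≤ L))
            (fun i _ hi => by
              rw [mem_range, not_lt] at hi
              have hμ0 : μ.parts i = 0 := μ.parts_eq_zero_of_len_le (by omega)
              have hν0 : ν.parts i = 0 := by rw [hparts i (by omega), hμ0]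
              rw [hμ0, hν0]
              simp)]
      rw [Finset.sum_range_succ]
      have hνn : ν.parts n = 0 := by rw [μ.eraseTop_parts hnext]; simp
      rw [hνn]
      simp only [range_zero, sum_empty, sub_zero]
      rw [← hm, rown]
      congr 1
      rw [Finset.sum_congr rfl (fun i hi => rowdelta i (mem_range.mp hi)),
          Finset.sum_add_distrib, ← Finset.sum_mul, ← Finset.sum_mul, ← Finset.sum_mul,
          ← Finset.sum_mul, hA, ← hSndef]
    -- assemble
    rw [hlen]
    rw [Finset.sum_range_succ, Finset.sum_range_succ, ← hRndef, ← hSndef, ← hm]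
    rw [sub_eq_iff_eq_add.mp e3, sub_eq_iff_eq_add.mp e4, ← IH]
    rw [hg3, hgbar3, hG3]
    have hmne : (x:ℂ)^m ≠ 0 := pow_ne_zero _ h0
    have hnne : (x:ℂ)^n ≠ 0 := pow_ne_zero _ h0
    rw [show ((((n+1:ℕ)):ℤ)+1) = (n:ℤ) + 1 + 1 from by push_cast; ring]
    rw [show x ^ ((n:ℤ)+1+1) = x^n * x * x from by
          rw [zpow_add₀ h0, zpow_add₀ h0, zpow_natCast, zpow_one],
        show x ^ ((n:ℤ)+1) = x^n * x from by rw [zpow_add₀ h0, zpow_natCast, zpow_one],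
        show x ^ (-(n:ℤ)-1) = (x^n)⁻¹ * x⁻¹ from by
          rw [show (-(n:ℤ)-1) = (-(n:ℤ)) + (-1:ℤ) from by ring, zpow_add₀ h0, zpow_neg,
            zpow_natCast, zpow_neg, zpow_one],
        show x ^ ((n:ℤ)-(m:ℤ)) = x^n * (x^m)⁻¹ from by
          rw [show ((n:ℤ)-(m:ℤ)) = (n:ℤ) + (-(m:ℤ)) from by ring, zpow_add₀ h0, zpow_neg,
            zpow_natCast, zpow_natCast],
        show x ^ ((m:ℕ):ℤ) = x^m from zpow_natCast x m]
    obtain ⟨N, hN, hNx⟩ : ∃ N : ℂ, N ≠ 0 ∧ x^n = N := ⟨x^n, hnne, rfl⟩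
    obtain ⟨M, hM, hMx⟩ : ∃ M : ℂ, M ≠ 0 ∧ x^m = M := ⟨x^m, hmne, rfl⟩
    rw [hNx, hMx]
    simp only [div_eq_mul_inv]
    have hz : x * x⁻¹ = 1 := mul_inv_cancel₀ h0
    have hu : (x-1) * (x-1)⁻¹ = 1 := mul_inv_cancel₀ h1
    have hn : N * N⁻¹ = 1 := mul_inv_cancel₀ hN
    apply mul_left_cancel₀ (show x * (x-1)^2 * N ≠ 0 from
      mul_ne_zero (mul_ne_zero h0 (pow_ne_zero 2 h1)) hN)
    linear_combination (x*N*Sn*N⁻¹ + (-1)*x*N*M*Sn*N⁻¹ + x*N^2*N⁻¹*M⁻¹ + (-1)*x*N^2*M*N⁻¹*M⁻¹ + (-2)*x^2*N*Sn*N⁻¹ + 2*x^2*N*M*Sn*N⁻¹ + (-2)*x^2*N^2*N⁻¹*M⁻¹ + (-1)*x^2*N^2*(x-1)⁻¹*N⁻¹ + x^2*N^2*(x-1)⁻¹^2 + (-1)*x^2*N^2*(x-1)⁻¹^2*M⁻¹ + (-1)*x^2*N^2*(x-1)⁻¹^2*N⁻¹ + x^2*N^2*(x-1)⁻¹^2*N⁻¹*M⁻¹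 + x^2*N^2*Rn*(x-1)⁻¹ + (-1)*x^2*N^2*Rn*(x-1)⁻¹*M⁻¹ + 2*x^2*N^2*M*N⁻¹*M⁻¹ + x^2*N^2*M*(x-1)⁻¹*N⁻¹ + x^3*N*Sn*N⁻¹ + (-1)*x^3*N*M*Sn*N⁻¹ + x^3*N^2*N⁻¹*M⁻¹ + 2*x^3*N^2*(x-1)⁻¹*N⁻¹ + (-2)*x^3*N^2*(x-1)⁻¹^2 + 2*x^3*N^2*(x-1)⁻¹^2*M⁻¹ + 2*x^3*N^2*(x-1)⁻¹^2*N⁻¹ + (-2)*x^3*N^2*(x-1)⁻¹^2*N⁻¹*M⁻¹ + (-2)*x^3*N^2*Rn*(x-1)⁻¹ + 2*x^3*N^2*Rn*(x-1)⁻¹*M⁻¹ + (-1)*x^3*N^2*M*N⁻¹*M⁻¹ + (-2)*x^3*N^2*M*(x-1)⁻¹*N⁻¹ + (-1)*x^4*N^2*(x-1)⁻¹*N⁻¹ + x^4*N^2*(x-1)⁻¹^2 + (-1)*x^4*N^2*(x-1)⁻¹^2*M⁻¹ + (-1)*x^4*N^2*(x-1)⁻¹^2*N⁻¹ + x^4*N^2*(x-1)⁻¹^2*N⁻¹*M⁻¹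 + x^4*N^2*Rn*(x-1)⁻¹ + (-1)*x^4*N^2*Rn*(x-1)⁻¹*M⁻¹ + x^4*N^2*M*(x-1)⁻¹*N⁻¹) * hz + ((-1)*x*N*M⁻¹ + (-1)*x*N*Sn*N⁻¹ + x*N*M*M⁻¹ + x*N*M*Sn*N⁻¹ + x^2*N*M⁻¹ + 2*x^2*N*Sn*N⁻¹ + x^2*N*M + (-2)*x^2*N*M*M⁻¹ + (-2)*x^2*N*M*Sn*N⁻¹ + x^2*N^2*N⁻¹*M⁻¹ + x^2*N^2*(x-1)⁻¹*N⁻¹ + (-1)*x^2*N^2*(x-1)⁻¹*N⁻¹*M⁻¹ + x^2*N^2*Rn*M⁻¹ + (-1)*x^2*N^2*M*N⁻¹ + (-1)*x^3*N*Sn*N⁻¹ + (-1)*x^3*N*M + x^3*N*M*M⁻¹ + x^3*N*M*Sn*N⁻¹ + (-1)*x^3*N^2*N⁻¹*M⁻¹ + (-2)*x^3*N^2*(x-1)⁻¹*N⁻¹ + 2*x^3*N^2*(x-1)⁻¹*N⁻¹*M⁻¹ + (-2)*x^3*N^2*Rn*M⁻¹ + x^3*N^2*M*N⁻¹ + x^4*N^2*(x-1)⁻¹*N⁻¹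 + (-1)*x^4*N^2*(x-1)⁻¹*N⁻¹*M⁻¹ + x^4*N^2*Rn*M⁻¹) * hu + (x*N*M⁻¹ + (-1)*x*N*M*M⁻¹ + (-1)*x^2*N*M⁻¹ + (-1)*x^2*N*M + 2*x^2*N*M*M⁻¹ + x^3*N*M + (-1)*x^3*N*M*M⁻¹) * hn


end Aux

/-- Corollary of Lemma 3.4 with `λ = μ`, `z₁ = x`, `z₂ = x⁻¹`: the tangent
weights at a monomial ideal are `{h(□), -h(□)}`.  Indices are 0-indexed:
the 1-indexed `(i, j)` is `(i₀+1, j₀+1)`, so `x^{1-j} = x^{-j₀}`,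
`x^{λᵗ_j - i} = x^{λ.conj j₀ - (i₀+1)}`, and `x^{-i} = x^{-(i₀+1)}`. -/
theorem stmt2 (lam : Ptn) (x : ℂ) (hx : 1 < ‖x‖) :
    (∀ i ∈ Finset.range lam.len,
        Summable fun j : ℕ =>
          ‖(x ^ (lam.parts i : ℤ) - 1) * x ^ (-(j : ℤ)) * x ^ ((lam.conj j : ℤ) - ((i : ℤ) + 1))‖)
    ∧ (∀ j ∈ Finset.range (lam.parts 0),
        Summable fun i : ℕ =>
          ‖(x ^ (lam.conj j : ℤ) - 1) * x ^ (-(j : ℤ)) * x ^ (-((i : ℤ) + 1))‖)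
    ∧ (∑ i ∈ Finset.range lam.len, ∑' j : ℕ,
          (x ^ (lam.parts i : ℤ) - 1) * x ^ (-(j : ℤ)) * x ^ ((lam.conj j : ℤ) - ((i : ℤ) + 1)))
        + (∑ j ∈ Finset.range (lam.parts 0), ∑' i : ℕ,
            (x ^ (lam.conj j : ℤ) - 1) * x ^ (-(j : ℤ)) * x ^ (-((i : ℤ) + 1)))
      = ∑ c ∈ lam.cells, (x ^ lam.hook c + x ^ (-(lam.hook c))) := by
  have h0 : x ≠ 0 := hx0 hx
  have h1 : x - 1 ≠ 0 := hxm1 hx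
  refine ⟨?_, ?_, ?_⟩
  · intro i _
    apply Summable.congr (f := fun j : ℕ =>
      ‖x ^ (lam.parts i : ℤ) - 1‖ * ‖x ^ ((-(j:ℤ)) + ((lam.conj j : ℤ) - ((i:ℤ)+1)))‖)
    · exact (summable_norm_zpow hx _ ((lam.len:ℤ) - (i:ℤ) - 1)
        (fun j => by have := lam.conj_le_len j; omega)).mul_left _
    · intro j
      rw [mul_assoc (x ^ (lam.parts i : ℤ) - 1), ← zpow_add₀ h0, norm_mul]
  · intro j _
    apply Summable.congr (f := fun i : ℕ =>
      ‖(x ^ (lam.conj j : ℤ) - 1) * x ^ (-(j:ℤ))‖ * ‖x ^ (-((i:ℤ)+1))‖)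
    · exact (summable_norm_zpow hx (fun i => -((i:ℤ)+1)) (-1)
        (fun i => by show -((i:ℤ)+1) ≤ -1 - (i:ℤ); omega)).mul_left _
    · intro i
      rw [← norm_mul]
  · have hW := lemA hx lam.len lam rfl
    have t1 : ∀ i : ℕ,
        (∑' j : ℕ, (x ^ (lam.parts i:ℤ) - 1) * x ^ (-(j:ℤ)) * x ^ ((lam.conj j:ℤ) - ((i:ℤ)+1)))
        = ((x ^ (lam.parts i:ℤ) - 1) * x ^ (-(i:ℤ)-1))
            * ∑' j : ℕ, x ^ ((lam.conj j:ℤ) - (j:ℤ)) := by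
      intro i
      rw [← tsum_mul_left]
      apply tsum_congr
      intro j
      rw [mul_assoc (x ^ (lam.parts i : ℤ) - 1), ← zpow_add₀ h0,
          show (-(j:ℤ)) + ((lam.conj j:ℤ) - ((i:ℤ)+1))
            = (-(i:ℤ)-1) + ((lam.conj j:ℤ) - (j:ℤ)) from by ring,
          zpow_add₀ h0, ← mul_assoc]
    have t2 : ∀ j : ℕ,
        (∑' i : ℕ, (x ^ (lam.conj j:ℤ) - 1) * x ^ (-(j:ℤ)) * x ^ (-((i:ℤ)+1)))
        = ((x ^ (lam.conj j:ℤ) - 1) * x ^ (-(j:ℤ))) * (x-1)⁻¹ := by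
      intro j
      rw [← tsum_geom_shift hx, ← tsum_mul_left]
      apply tsum_congr
      intro i
      rw [show (-((i:ℤ)+1)) = (-(i:ℤ)-1) from by ring]
    have hcells : (∑ c ∈ lam.cells, (x ^ lam.hook c + x ^ (-(lam.hook c))))
        = ∑ i ∈ Finset.range (lam.size+1), ∑ j ∈ Finset.range (lam.parts i),
            (x ^ ((lam.parts i:ℤ) + (lam.conj j:ℤ) - i - j - 1)
              + x ^ (-((lam.parts i:ℤ) + (lam.conj j:ℤ) - i - j - 1))) := by
      rw [Ptn.cells, Finset.sum_filter, Finset.sum_product]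
      apply Finset.sum_congr rfl
      intro i _
      rw [← Finset.sum_subset
            (Finset.range_subset_range.mpr (show lam.parts i ≤ lam.size+1 from by
              have := lam.parts_le_size i; omega))
            (fun j _ hj => if_neg (by simpa using hj))]
      apply Finset.sum_congr rfl
      intro j hj
      rw [if_pos (Finset.mem_range.mp hj),
          show lam.hook (i, j) = (lam.parts i:ℤ) + (lam.conj j:ℤ) - i - j - 1 from by
            simp [Ptn.hook, Ptn.arm, Ptn.leg]; ring]
    have hlenle : lam.len ≤ lam.size + 1 := by
      rcases Nat.eq_zero_or_pos lam.len with h | h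
      · omega
      · have := lam.lt_size_of_ne (i := lam.len - 1) ((lam.lt_len_iff).mp (by omega))
        omega
    rw [Finset.sum_congr rfl (fun i _ => t1 i), Finset.sum_congr rfl (fun j _ => t2 j),
        ← Finset.sum_mul, ← Finset.sum_mul, hW, hcells, ← div_eq_mul_inv]
    exact aux hx lam.len lam rfl (lam.parts 0) (lam.size+1) le_rfl hlenle
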